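/- Let E be a real normed vector space (the state space), A a nonempty finite set, Q* : E → A → ℝ, and ε > 0. Define S_nu := {s : Argmax(Q*, s) is not a singleton}; S' := {s : for some a ∈ A, x ↦ Q*(x, a) is not continuous at s}; S_n := {s : for every ε₁ > 0 there exists s' with ‖s' − s‖ ≤ ε₁ and Argmax(Q*, s') ≠ Argmax(Q*, s)}; S₀ := S_n ∩ S'; and S_nin := {s : B_ε(s) ≠ B*_ε(s)}. Then S_nin ⊆ (S_nu ∪ S₀) + B_ε; that is, for every s ∈ S_nin there exists y ∈ S_nu ∪ S₀ with ‖s − y‖ ≤ ε. -/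

import Mathlib

/-- The argmax set of a `Q`-function at a state `x`. -/
def Amax {X A : Type*} (Q : X → A → ℝ) (x : X) : Set A :=
  {a | ∀ a', Q x a' ≤ Q x a}

/-- Sparse difference between intrinsic and standard state neighborhoods:
every state whose `ε`-neighborhood differs from its intrinsic `ε`-neighborhood lies
within distance `ε` of the set `S_nu ∪ S₀` (non-unique argmax states, or discontinuity
points causing the optimal action to change). -/
theorem stmt1 {E : Type*} [NormedAddCommGroup E] [NormedSpace ℝ E]
    {A : Type*} [Fintype A] [Nonempty A]
    (Q : E → A → ℝ) (ε : ℝ) (hε : 0 < ε)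
    (Snu Sd Sn S0 Snin : Set E)
    (hSnu : Snu = {s | ¬ ∃ a₀, Amax Q s = {a₀}})
    (hSd : Sd = {s | ∃ a, ¬ ContinuousAt (fun x => Q x a) s})
    (hSn : Sn = {s | ∀ ε₁ > (0:ℝ), ∃ s', ‖s' - s‖ ≤ ε₁ ∧ Amax Q s' ≠ Amax Q s})
    (hS0 : S0 = Sn ∩ Sd)
    (hSnin : Snin = {s | {s' | ‖s' - s‖ ≤ ε} ≠ {s' | ‖s' - s‖ ≤ ε ∧ Amax Q s' = Amax Q s}}) :
    ∀ s ∈ Snin, ∃ y ∈ Snu ∪ S0, ‖s - y‖ ≤ ε := by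
  subst hSnu hSd hSn hS0 hSnin
  intro s hs
  simp only [Set.mem_setOf_eq] at hs
  have hex : ∃ s', ‖s' - s‖ ≤ ε ∧ Amax Q s' ≠ Amax Q s := by
    rw [Ne, Set.ext_iff] at hs; push_neg at hs
    obtain ⟨x, hx⟩ := hs
    simp only [Set.mem_setOf_eq] at hx
    refine ⟨x, ?_, ?_⟩ <;> tauto
  obtain ⟨s', hs'ε, hs'ne⟩ := hex
  have hss' : s' ≠ s := by rintro rfl; exact hs'ne rfl
  set v := s' - s with hv
  have hr : 0 < ‖v‖ := by
    simpa [hv, sub_eq_zero] using hss'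
  set γ : ℝ → E := fun t => s + t • v with hγ
  have hγ0 : γ 0 = s := by simp [hγ]
  have hγ1 : γ 1 = s' := by simp [hγ, hv]
  have hdist : ∀ t u : ℝ, ‖γ t - γ u‖ = |t - u| * ‖v‖ := by
    intro t u
    have h1 : γ t - γ u = (t - u) • v := by
      simp only [hγ, sub_smul]; abel
    rw [h1, norm_smul, Real.norm_eq_abs]
  set T : Set ℝ := {t | t ∈ Set.Icc (0:ℝ) 1 ∧ Amax Q (γ t) ≠ Amax Q s} with hT
  have h1T : (1:ℝ) ∈ T := ⟨⟨zero_le_one, le_refl 1⟩, by rw [hγ1]; exact hs'ne⟩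
  have hTne : T.Nonempty := ⟨1, h1T⟩
  have hTbdd : BddBelow T := ⟨0, fun t ht => ht.1.1⟩
  set t₀ := sInf T with ht₀
  have ht₀0 : 0 ≤ t₀ := le_csInf hTne (fun t ht => ht.1.1)
  have ht₀1 : t₀ ≤ 1 := csInf_le hTbdd h1T
  set y := γ t₀ with hy
  have hsy : ‖s - y‖ ≤ ε := by
    rw [← hγ0, hdist]
    have h1 : |0 - t₀| = t₀ := by rw [zero_sub, abs_neg, abs_of_nonneg ht₀0]
    rw [h1]
    calc t₀ * ‖v‖ ≤ 1 * ε := by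
          apply mul_le_mul ht₀1 hs'ε (norm_nonneg _) zero_le_one
      _ = ε := one_mul ε
  -- y is in S_n
  have hySn : ∀ ε₁ > (0:ℝ), ∃ s'', ‖s'' - y‖ ≤ ε₁ ∧ Amax Q s'' ≠ Amax Q y := by
    intro ε₁ hε₁
    by_cases hcase : Amax Q y = Amax Q s
    · have hlt : t₀ < t₀ + ε₁ / ‖v‖ := by
        have : 0 < ε₁ / ‖v‖ := div_pos hε₁ hr
        linarith
      obtain ⟨t, htT, htlt⟩ := exists_lt_of_csInf_lt hTne hlt
      have ht₀t : t₀ ≤ t := csInf_le hTbdd htT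
      refine ⟨γ t, ?_, ?_⟩
      · rw [hdist]
        have h1 : |t - t₀| = t - t₀ := abs_of_nonneg (by linarith)
        rw [h1]
        have h2 : t - t₀ < ε₁ / ‖v‖ := by linarith
        calc (t - t₀) * ‖v‖ ≤ (ε₁ / ‖v‖) * ‖v‖ := by
              apply mul_le_mul_of_nonneg_right h2.le (norm_nonneg _)
          _ = ε₁ := div_mul_cancel₀ ε₁ hr.ne'
      · rw [hcase]; exact htT.2
    · have ht₀pos : 0 < t₀ := by
        rcases ht₀0.lt_or_eq with h | h
        · exact h
        · exfalso; apply hcase; rw [hy, ← h, hγ0]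
      set δ := min (ε₁ / ‖v‖) t₀ with hδ
      have hδpos : 0 < δ := lt_min (div_pos hε₁ hr) ht₀pos
      set t := t₀ - δ / 2 with ht
      have ht0 : 0 ≤ t := by
        have : δ ≤ t₀ := min_le_right _ _
        simp only [ht]; linarith
      have htlt : t < t₀ := by simp only [ht]; linarith
      have ht1 : t ≤ 1 := by linarith
      have htnotT : t ∉ T := fun h => absurd (csInf_le hTbdd h) (not_le.2 htlt)
      have heq : Amax Q (γ t) = Amax Q s := by
        by_contra hne; exact htnotT ⟨⟨ht0, ht1⟩, hne⟩
      refine ⟨γ t, ?_, ?_⟩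
      · rw [hdist]
        have h1 : |t - t₀| = δ / 2 := by
          rw [ht]; rw [show t₀ - δ / 2 - t₀ = -(δ / 2) by ring, abs_neg,
            abs_of_nonneg (by linarith)]
        rw [h1]
        have h2 : δ ≤ ε₁ / ‖v‖ := min_le_left _ _
        calc δ / 2 * ‖v‖ ≤ (ε₁ / ‖v‖) * ‖v‖ := by
              apply mul_le_mul_of_nonneg_right (by linarith) (norm_nonneg _)
          _ = ε₁ := div_mul_cancel₀ ε₁ hr.ne'
      · rw [heq]; exact fun h => hcase h.symm
  by_cases hu : ∃ a₀, Amax Q y = {a₀}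
  · -- y is in Sd, hence in S0
    obtain ⟨a₀, ha₀⟩ := hu
    refine ⟨y, Or.inr ⟨hySn, ?_⟩, hsy⟩
    simp only [Set.mem_setOf_eq]
    by_contra hcont
    push_neg at hcont
    have ha₀mem : a₀ ∈ Amax Q y := by rw [ha₀]; exact rfl
    have hstrict : ∀ a, a ≠ a₀ → Q y a < Q y a₀ := by
      intro a ha
      have hle : Q y a ≤ Q y a₀ := ha₀mem a
      rcases hle.lt_or_eq with h | h
      · exact h
      · exfalso; apply ha
        have hmem : a ∈ Amax Q y := fun a' => (ha₀mem a').trans h.ge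
        rw [ha₀] at hmem; exact hmem
    have hev : ∀ᶠ x in nhds y, ∀ a, a ≠ a₀ → Q x a < Q x a₀ := by
      rw [Filter.eventually_all]
      intro a
      by_cases h : a = a₀
      · filter_upwards with x hx; exact absurd h hx
      · have hpos : (0:ℝ) < Q y a₀ - Q y a := sub_pos.2 (hstrict a h)
        have := ((hcont a₀).sub (hcont a)).eventually (eventually_gt_nhds hpos)
        filter_upwards [this] with x hx _
        simp only [Pi.sub_apply] at hx
        linarith
    have hev2 : ∀ᶠ x in nhds y, Amax Q x = {a₀} := by
      filter_upwards [hev] with x hx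
      ext a
      simp only [Amax, Set.mem_setOf_eq, Set.mem_singleton_iff]
      constructor
      · intro hmax; by_contra hne
        exact absurd (hmax a₀) (not_le.2 (hx a hne))
      · rintro rfl a'
        by_cases h' : a' = a
        · rw [h']
        · exact (hx a' h').le
    rw [Metric.eventually_nhds_iff] at hev2
    obtain ⟨δ, hδ, hball⟩ := hev2
    obtain ⟨s'', hs''d, hs''ne⟩ := hySn (δ / 2) (by linarith)
    apply hs''ne
    rw [hball (show dist s'' y < δ by rw [dist_eq_norm]; linarith), ha₀]
  · exact ⟨y, Or.inl hu, hsy⟩
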